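/- For all trace-free A₁, A₂, A₃, B₁, B₂, B₃ ∈ SL(2,ℂ): tr(A₁A₂A₃)·tr(B₁B₂B₃) = (1/2)·det M, where M is the 3×3 complex matrix with entries M_{p,q} = −tr(A_p B_q) for 1 ≤ p, q ≤ 3. (This is the hexagon relation (H).) -/
import Mathlib


open Matrix

/-- `SL(2,ℂ)`. -/
abbrev SL2C := Matrix.SpecialLinearGroup (Fin 2) ℂ

/-- The trace of an element of `SL(2,ℂ)`. -/
noncomputable def trSL2 (A : SL2C) : ℂ := Matrix.trace (A : Matrix (Fin 2) (Fin 2) ℂ)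

/-- The hexagon relation (H): for trace-free `A₁, A₂, A₃, B₁, B₂, B₃ ∈ SL(2,ℂ)`,
`tr(A₁A₂A₃)·tr(B₁B₂B₃) = (1/2)·det M` where `M_{p,q} = −tr(A_p B_q)`. -/
theorem stmt7 (A B : Fin 3 → SL2C)
    (hA : ∀ p, trSL2 (A p) = 0) (hB : ∀ q, trSL2 (B q) = 0) :
    trSL2 (A 0 * A 1 * A 2) * trSL2 (B 0 * B 1 * B 2) =
      (1 / 2) * Matrix.det (Matrix.of fun p q : Fin 3 => -trSL2 (A p * B q)) := by
  have eA : ∀ p, ((A p : Matrix (Fin 2) (Fin 2) ℂ) 1 1) = -((A p : Matrix (Fin 2) (Fin 2) ℂ) 0 0) := by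
    intro p
    have h := hA p
    simp [trSL2, Matrix.trace_fin_two] at h
    linear_combination h
  have eB : ∀ q, ((B q : Matrix (Fin 2) (Fin 2) ℂ) 1 1) = -((B q : Matrix (Fin 2) (Fin 2) ℂ) 0 0) := by
    intro q
    have h := hB q
    simp [trSL2, Matrix.trace_fin_two] at h
    linear_combination h
  simp only [trSL2, Matrix.SpecialLinearGroup.coe_mul, Matrix.trace_fin_two,
    Matrix.det_fin_three, Matrix.mul_apply, Fin.sum_univ_two, Matrix.of_apply,
    eA 0, eA 1, eA 2, eB 0, eB 1, eB 2]
  ring
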